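/- Let n ≥ 2 and ε = 3√2 − 4. If n√n·α ≤ ε for α > 0, then (2√(2n)/(n-1))(2+(n-1)²)α + (2√n/(n-1))(n+(n-1)²)α² ≤ 4.5 n√n α. -/

import Mathlib

set_option maxHeartbeats 1000000

theorem stmt_15 (n : ℕ) (hn : 2 ≤ n) (α : ℝ) (hα : 0 < α)
    (hsmall : (n : ℝ) * Real.sqrt n * α ≤ 3 * Real.sqrt 2 - 4) :
    (2 * Real.sqrt (2 * n) / ((n : ℝ) - 1)) * (2 + ((n : ℝ) - 1) ^ 2) * α +
        (2 * Real.sqrt n / ((n : ℝ) - 1)) * ((n : ℝ) + ((n : ℝ) - 1) ^ 2) * α ^ 2 ≤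
      4.5 * (n : ℝ) * Real.sqrt n * α := by
  have hN2 : (2:ℝ) ≤ (n:ℝ) := by exact_mod_cast hn
  have ht : (0:ℝ) < (n:ℝ) - 1 := by linarith
  have hsq : Real.sqrt (2 * (n:ℝ)) = Real.sqrt 2 * Real.sqrt n := by
    rw [Real.sqrt_mul (by norm_num)]
  have hsq' : Real.sqrt (2 * n : ℕ) = Real.sqrt 2 * Real.sqrt n := by
    push_cast; exact hsq
  set s := Real.sqrt (n:ℝ) with hsdef
  set q := Real.sqrt 2 with hqdef
  have hs2 : s ^ 2 = (n:ℝ) := Real.sq_sqrt (by positivity)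
  have hq2 : q ^ 2 = 2 := Real.sq_sqrt (by norm_num)
  have hspos : 0 < s := Real.sqrt_pos.mpr (by linarith)
  have hqpos : 0 < q := Real.sqrt_pos.mpr (by norm_num)
  have hq17 : q ≤ 17/12 := by nlinarith
  have hq43 : 4/3 ≤ q := by nlinarith
  rw [show Real.sqrt (2 * n : ℝ) = q * s from hsq]
  rw [div_mul_eq_mul_div, div_mul_eq_mul_div, div_mul_eq_mul_div, div_mul_eq_mul_div,
    ← add_div, div_le_iff₀ ht]
  by_cases h3 : 3 ≤ n
  · have hN3 : (3:ℝ) ≤ (n:ℝ) := by exact_mod_cast h3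
    have hs1 : 1 ≤ s := by nlinarith
    -- bound the quadratic term
    have hkey1 : 2 * s * ((n:ℝ) + ((n:ℝ)-1)^2) * α ^ 2 ≤ 2 * (n:ℝ) * α * (3*q - 4) := by
      have h1 : (n:ℝ) * s * α ≤ 3*q - 4 := hsmall
      have h2 : 2 * (n:ℝ) * α * ((n:ℝ) * s * α) ≤ 2 * (n:ℝ) * α * (3*q - 4) :=
        mul_le_mul_of_nonneg_left h1 (by positivity)
      have h3' : (n:ℝ) + ((n:ℝ)-1)^2 ≤ (n:ℝ)^2 := by nlinarith
      have h4 : 2*s*α^2*((n:ℝ)+((n:ℝ)-1)^2) ≤ 2*s*α^2*(n:ℝ)^2 :=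
        mul_le_mul_of_nonneg_left h3' (by positivity)
      nlinarith [h2, h4]
    have hbr : (n:ℝ)/2 ≤ 4.5 * (n:ℝ) * ((n:ℝ)-1) - 2 * q * (2 + ((n:ℝ)-1)^2) := by
      nlinarith
    have hq4 : 2*(n:ℝ)*(3*q-4) ≤ (n:ℝ)/2 := by
      nlinarith [mul_nonneg (by linarith : (0:ℝ) ≤ 17/12 - q) (by linarith : (0:ℝ) ≤ (n:ℝ))]
    have hbr' : 2 * q * s * (2 + ((n:ℝ)-1)^2) * α + 2 * (n:ℝ) * α * (3*q - 4) ≤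
        4.5 * (n:ℝ) * s * α * ((n:ℝ)-1) := by
      have hsb : 1 * (4.5 * (n:ℝ) * ((n:ℝ)-1) - 2 * q * (2 + ((n:ℝ)-1)^2)) ≤
          s * (4.5 * (n:ℝ) * ((n:ℝ)-1) - 2 * q * (2 + ((n:ℝ)-1)^2)) :=
        mul_le_mul_of_nonneg_right hs1 (by linarith)
      have hmain : 2 * q * s * (2 + ((n:ℝ)-1)^2) + 2 * (n:ℝ) * (3*q - 4) ≤
          4.5 * (n:ℝ) * s * ((n:ℝ)-1) := by linarith
      have := mul_le_mul_of_nonneg_right hmain hα.le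
      linarith [this]
    linarith
  · have hn2 : n = 2 := by omega
    subst hn2
    have hs : s = q := by norm_num [hsdef, hqdef]
    rw [hs]
    push_cast
    have h1 : 2 * q * α ≤ 3 * q - 4 := by
      have := hsmall
      rw [hs] at this; push_cast at this; linarith
    nlinarith [mul_le_mul_of_nonneg_right h1 hα.le, hq2, hqpos, hα.le]
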